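/- arXiv:1502.02142 — 4 statements merged into one kernel-verified Lean document; each statement's English description precedes it below -/
import Mathlib

section
/- Uniqueness part of the abstract well-posedness theorem (Theorem 1.1): under hypotheses (H1) and (H2), the abstract evolution problem in mixed form has at most one strong solution: if (p₁, u₁) and (p₂, u₂) are both strong solutions on [0,T] with the same source term L and the same initial value p₀, then p₁(t) = p₂(t) and u₁(t) = u₂(t) for every t ∈ [0,T]. -/
open MeasureTheory Set
open scoped RealInnerProductSpace

/-- Uniqueness part of the abstract well-posedness theorem (Theorem 1.1). -/
theorem stmt_1
    {M V : Type*}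
    [NormedAddCommGroup M] [InnerProductSpace ℝ M] [CompleteSpace M]
    [NormedAddCommGroup V] [InnerProductSpace ℝ V] [CompleteSpace V]
    (a : V →L[ℝ] V →L[ℝ] ℝ) (b : V →L[ℝ] M →L[ℝ] ℝ) (c : M →L[ℝ] M →L[ℝ] ℝ)
    (H1 : ∀ u : V, u ≠ 0 → 0 < a u u)
    (H2 : ∀ μ : M, 0 ≤ c μ μ)
    (T : ℝ) (hT : 0 < T)
    (L : ℝ → M) (hLmeas : StronglyMeasurable L)
    (hLint : IntegrableOn (fun t => ‖L t‖ ^ 2) (Icc 0 T))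
    (p₀ : M)
    (p₁ p₁' p₂ p₂' : ℝ → M) (u₁ u₂ : ℝ → V)
    -- (p₁, u₁) is a strong solution
    (hp₁cont : ContinuousOn p₁ (Icc 0 T)) (hp₁0 : p₁ 0 = p₀)
    (hp₁deriv : ∀ t ∈ Icc (0:ℝ) T, HasDerivAt p₁ (p₁' t) t)
    (heq₁a : ∀ t ∈ Icc (0:ℝ) T, ∀ v : V, a (u₁ t) v = b v (p₁ t))
    (heq₁b : ∀ t ∈ Icc (0:ℝ) T, ∀ μ : M,
      ⟪p₁' t, μ⟫ + c (p₁ t) μ + b (u₁ t) μ = ⟪L t, μ⟫)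
    -- (p₂, u₂) is a strong solution
    (hp₂cont : ContinuousOn p₂ (Icc 0 T)) (hp₂0 : p₂ 0 = p₀)
    (hp₂deriv : ∀ t ∈ Icc (0:ℝ) T, HasDerivAt p₂ (p₂' t) t)
    (heq₂a : ∀ t ∈ Icc (0:ℝ) T, ∀ v : V, a (u₂ t) v = b v (p₂ t))
    (heq₂b : ∀ t ∈ Icc (0:ℝ) T, ∀ μ : M,
      ⟪p₂' t, μ⟫ + c (p₂ t) μ + b (u₂ t) μ = ⟪L t, μ⟫) :
    ∀ t ∈ Icc (0:ℝ) T, p₁ t = p₂ t ∧ u₁ t = u₂ t := by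
  have ha_nonneg : ∀ w : V, 0 ≤ a w w := by
    intro w
    rcases eq_or_ne w 0 with h | h
    · simp [h]
    · exact (H1 w h).le
  -- a(w,w) = b(w, q t)
  have haw : ∀ t ∈ Icc (0:ℝ) T,
      a (u₁ t - u₂ t) (u₁ t - u₂ t) = b (u₁ t - u₂ t) (p₁ t - p₂ t) := by
    intro t ht
    have e1 := heq₁a t ht (u₁ t - u₂ t)
    have e2 := heq₂a t ht (u₁ t - u₂ t)
    simp only [map_sub, ContinuousLinearMap.sub_apply] at e1 e2 ⊢
    linarith
  have key : ∀ t ∈ Icc (0:ℝ) T, ⟪p₁' t - p₂' t, p₁ t - p₂ t⟫ ≤ 0 := by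
    intro t ht
    have h1 := heq₁b t ht (p₁ t - p₂ t)
    have h2 := heq₂b t ht (p₁ t - p₂ t)
    have hc := H2 (p₁ t - p₂ t)
    have hb : 0 ≤ b (u₁ t - u₂ t) (p₁ t - p₂ t) := (haw t ht) ▸ ha_nonneg _
    simp only [map_sub, ContinuousLinearMap.sub_apply] at h1 h2 hc hb
    rw [inner_sub_left]
    linarith
  set g : ℝ → ℝ := fun t => ⟪p₁ t - p₂ t, p₁ t - p₂ t⟫ with hg
  have hgderiv : ∀ t ∈ Icc (0:ℝ) T,
      HasDerivAt g (2 * ⟪p₁' t - p₂' t, p₁ t - p₂ t⟫) t := by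
    intro t ht
    have hq : HasDerivAt (fun s => p₁ s - p₂ s) (p₁' t - p₂' t) t :=
      (hp₁deriv t ht).sub (hp₂deriv t ht)
    have := hq.inner ℝ hq
    convert this using 1
    · rfl
    · rfl
    rw [real_inner_comm]
    ring
  have hgcont : ContinuousOn g (Icc 0 T) := fun t ht =>
    ((hgderiv t ht).continuousAt).continuousWithinAt
  have hanti : AntitoneOn g (Icc 0 T) := by
    apply antitoneOn_of_deriv_nonpos (convex_Icc 0 T) hgcont
    · intro t ht
      rw [interior_Icc] at ht
      exact ((hgderiv t (Ioo_subset_Icc_self ht)).differentiableAt).differentiableWithinAt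
    · intro t ht
      rw [interior_Icc] at ht
      have := (hgderiv t (Ioo_subset_Icc_self ht)).deriv
      rw [this]
      have := key t (Ioo_subset_Icc_self ht)
      linarith
  have hpq : ∀ t ∈ Icc (0:ℝ) T, p₁ t = p₂ t := by
    intro t ht
    have h0 : g 0 = 0 := by simp [hg, hp₁0, hp₂0]
    have hle : g t ≤ 0 := h0 ▸ hanti (left_mem_Icc.mpr (le_of_lt hT)) ht ht.1
    have hge : 0 ≤ g t := real_inner_self_nonneg
    have : ⟪p₁ t - p₂ t, p₁ t - p₂ t⟫ = 0 := le_antisymm hle hge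
    have := inner_self_eq_zero.mp this
    exact sub_eq_zero.mp this
  intro t ht
  refine ⟨hpq t ht, ?_⟩
  have h0 : a (u₁ t - u₂ t) (u₁ t - u₂ t) = 0 := by
    rw [haw t ht, hpq t ht]
    simp
  by_contra h
  have hne : u₁ t - u₂ t ≠ 0 := fun hw => h (sub_eq_zero.mp hw)
  exact absurd h0 (ne_of_gt (H1 _ hne))
end

section
/- First a priori estimate of Lemma A.1 (L^∞-in-time bound on the pressure): under hypotheses (H1) and (H2), if (p,u) is a strong solution of the abstract evolution problem in mixed form on [0,T], then for every t ∈ [0,T] one has ‖p(t)‖²_M ≤ exp(T) · ( ‖p₀‖²_M + ∫₀ᵀ ‖L(s)‖²_M ds ). -/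
open MeasureTheory Set
open scoped RealInnerProductSpace

/-- First a priori estimate of Lemma A.1: L^∞-in-time bound on the pressure. -/
theorem stmt_2
    {M V : Type*}
    [NormedAddCommGroup M] [InnerProductSpace ℝ M] [CompleteSpace M]
    [NormedAddCommGroup V] [InnerProductSpace ℝ V] [CompleteSpace V]
    (a : V →L[ℝ] V →L[ℝ] ℝ) (b : V →L[ℝ] M →L[ℝ] ℝ) (c : M →L[ℝ] M →L[ℝ] ℝ)
    (H1 : ∀ u : V, u ≠ 0 → 0 < a u u)
    (H2 : ∀ μ : M, 0 ≤ c μ μ)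
    (T : ℝ) (hT : 0 < T)
    (L : ℝ → M) (hLmeas : StronglyMeasurable L)
    (hLint : IntegrableOn (fun t => ‖L t‖ ^ 2) (Icc 0 T))
    (p₀ : M)
    (p p' : ℝ → M) (u : ℝ → V)
    (hpcont : ContinuousOn p (Icc 0 T)) (hp0 : p 0 = p₀)
    (hpderiv : ∀ t ∈ Icc (0:ℝ) T, HasDerivAt p (p' t) t)
    (heqa : ∀ t ∈ Icc (0:ℝ) T, ∀ v : V, a (u t) v = b v (p t))
    (heqb : ∀ t ∈ Icc (0:ℝ) T, ∀ μ : M,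
      ⟪p' t, μ⟫ + c (p t) μ + b (u t) μ = ⟪L t, μ⟫) :
    ∀ t ∈ Icc (0:ℝ) T,
      ‖p t‖ ^ 2 ≤ Real.exp T * (‖p₀‖ ^ 2 + ∫ s in (0:ℝ)..T, ‖L s‖ ^ 2) := by
  intro t ht
  -- auxiliary function g s = exp(-s) * ‖p s‖²
  set g : ℝ → ℝ := fun s => Real.exp (-s) * ‖p s‖ ^ 2 with hg
  set g' : ℝ → ℝ := fun s => Real.exp (-s) * (2 * ⟪p' s, p s⟫ - ‖p s‖ ^ 2) with hg'
  have hgderiv : ∀ s ∈ Icc (0:ℝ) T, HasDerivAt g (g' s) s := by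
    intro s hs
    have h1 : HasDerivAt (fun s => Real.exp (-s)) (-Real.exp (-s)) s := by
      simpa [Function.comp_def] using (Real.hasDerivAt_exp (-s)).comp s (hasDerivAt_neg s)
    have h2 : HasDerivAt (fun s => ‖p s‖ ^ 2) (2 * ⟪p' s, p s⟫) s := by
      have := (hpderiv s hs).inner ℝ (hpderiv s hs)
      have h3 : HasDerivAt (fun s => ⟪p s, p s⟫)
          (⟪p s, p' s⟫ + ⟪p' s, p s⟫) s := this
      have heq : (fun s => ‖p s‖ ^ 2) = fun s => ⟪p s, p s⟫ := by
        funext x; rw [real_inner_self_eq_norm_sq]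
      rw [heq]
      convert h3 using 1
      rw [real_inner_comm (p s) (p' s)]; ring
    have : HasDerivAt (fun y => Real.exp (-y) * ‖p y‖ ^ 2)
        (-Real.exp (-s) * ‖p s‖ ^ 2 + Real.exp (-s) * (2 * ⟪p' s, p s⟫)) s := h1.mul h2
    convert this using 1
    show Real.exp (-s) * (2 * ⟪p' s, p s⟫ - ‖p s‖ ^ 2) = _
    ring
  -- the derivative bound
  have hbound : ∀ s ∈ Icc (0:ℝ) T, g' s ≤ ‖L s‖ ^ 2 := by
    intro s hs
    have hkey : ⟪p' s, p s⟫ = ⟪L s, p s⟫ - c (p s) (p s) - b (u s) (p s) := by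
      have := heqb s hs (p s); linarith
    have hb : (0:ℝ) ≤ b (u s) (p s) := by
      rw [← heqa s hs (u s)]
      rcases eq_or_ne (u s) 0 with h | h
      · simp [h]
      · exact (H1 (u s) h).le
    have hc := H2 (p s)
    have hL : ⟪L s, p s⟫ ≤ ‖L s‖ * ‖p s‖ := real_inner_le_norm _ _
    have hsq : ‖L s‖ * ‖p s‖ ≤ (‖L s‖ ^ 2 + ‖p s‖ ^ 2) / 2 := by nlinarith [sq_nonneg (‖L s‖ - ‖p s‖)]
    have h2 : 2 * ⟪p' s, p s⟫ - ‖p s‖ ^ 2 ≤ ‖L s‖ ^ 2 := by nlinarith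
    have hexp : Real.exp (-s) ≤ 1 := Real.exp_le_one_iff.mpr (by linarith [hs.1])
    calc g' s ≤ Real.exp (-s) * ‖L s‖ ^ 2 := by
          apply mul_le_mul_of_nonneg_left h2 (Real.exp_pos _).le
      _ ≤ 1 * ‖L s‖ ^ 2 := by
          apply mul_le_mul_of_nonneg_right hexp (by positivity)
      _ = ‖L s‖ ^ 2 := one_mul _
  -- apply the FTC-type inequality on [0, t]
  have ht0 : (0:ℝ) ≤ t := ht.1
  have hsub : Icc (0:ℝ) t ⊆ Icc 0 T := Icc_subset_Icc le_rfl ht.2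
  have hcontg : ContinuousOn g (Icc 0 t) := by
    apply ContinuousOn.mul
    · exact (Real.continuous_exp.comp continuous_neg).continuousOn
    · exact ((hpcont.mono hsub).norm.pow 2)
  have hint : IntegrableOn (fun s => ‖L s‖ ^ 2) (Icc 0 t) := hLint.mono_set hsub
  have hFTC : g t - g 0 ≤ ∫ s in (0:ℝ)..t, ‖L s‖ ^ 2 := by
    apply intervalIntegral.sub_le_integral_of_hasDeriv_right_of_le ht0 hcontg
      (fun x hx => ((hgderiv x ⟨hx.1.le, hx.2.le.trans ht.2⟩).hasDerivWithinAt)) hint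
      (fun x hx => hbound x ⟨hx.1.le, hx.2.le.trans ht.2⟩)
  -- monotonicity of the integral: ∫₀ᵗ ≤ ∫₀ᵀ
  have hmono : (∫ s in (0:ℝ)..t, ‖L s‖ ^ 2) ≤ ∫ s in (0:ℝ)..T, ‖L s‖ ^ 2 := by
    apply intervalIntegral.integral_mono_interval le_rfl ht0 ht.2
    · filter_upwards [] with x; positivity
    · rw [intervalIntegrable_iff_integrableOn_Ioc_of_le hT.le]
      exact hLint.mono_set Ioc_subset_Icc_self
  have hg0 : g 0 = ‖p₀‖ ^ 2 := by simp [hg, hp0]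
  have hgt : g t ≤ ‖p₀‖ ^ 2 + ∫ s in (0:ℝ)..T, ‖L s‖ ^ 2 := by
    rw [← hg0]; linarith
  -- conclude
  have hexp_t : ‖p t‖ ^ 2 = Real.exp t * g t := by
    simp only [hg, ← mul_assoc, ← Real.exp_add]
    simp
  rw [hexp_t]
  have h1 : Real.exp t * g t ≤ Real.exp t * (‖p₀‖ ^ 2 + ∫ s in (0:ℝ)..T, ‖L s‖ ^ 2) := by
    apply mul_le_mul_of_nonneg_left hgt (Real.exp_pos _).le
  have h2 : Real.exp t ≤ Real.exp T := Real.exp_le_exp.mpr ht.2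
  have h3 : (0:ℝ) ≤ ‖p₀‖ ^ 2 + ∫ s in (0:ℝ)..T, ‖L s‖ ^ 2 := by
    have : (0:ℝ) ≤ ∫ s in (0:ℝ)..T, ‖L s‖ ^ 2 := by
      apply intervalIntegral.integral_nonneg hT.le
      intro x _; positivity
    positivity
  calc Real.exp t * g t ≤ Real.exp t * (‖p₀‖ ^ 2 + ∫ s in (0:ℝ)..T, ‖L s‖ ^ 2) := h1
    _ ≤ Real.exp T * (‖p₀‖ ^ 2 + ∫ s in (0:ℝ)..T, ‖L s‖ ^ 2) :=
        mul_le_mul_of_nonneg_right h2 h3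
end

section
/- Second a priori estimate of Lemma A.1 (L²-in-time bound for the velocity in the a-norm): under hypotheses (H1) and (H2), if (p,u) is a strong solution of the abstract evolution problem in mixed form on [0,T] and the function t ↦ a(u(t), u(t)) is integrable on [0,T], then ∫₀ᵀ a(u(t), u(t)) dt ≤ (1/2)·(1 + T·exp(T)) · ( ‖p₀‖²_M + ∫₀ᵀ ‖L(s)‖²_M ds ). -/
open MeasureTheory Set
open scoped RealInnerProductSpace

/-- Integral form of Gronwall's inequality. -/
lemma gronwall_integral_form {f : ℝ → ℝ} {K T : ℝ} (hT : 0 ≤ T) (hK : 0 ≤ K)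
    (hfc : ∀ t ∈ Icc (0:ℝ) T, ContinuousAt f t)
    (h : ∀ t ∈ Icc (0:ℝ) T, f t ≤ K + ∫ s in (0:ℝ)..t, f s) :
    ∀ t ∈ Icc (0:ℝ) T, f t ≤ K * Real.exp t := by
  have hfcont : ContinuousOn f (Icc 0 T) := fun t ht => (hfc t ht).continuousWithinAt
  have hfint : IntegrableOn f (Icc 0 T) := hfcont.integrableOn_Icc
  set F : ℝ → ℝ := fun t => ∫ s in (0:ℝ)..t, f s with hF
  have hFcont : ContinuousOn F (Icc 0 T) := by
    have : IntegrableOn f (uIcc 0 T) := by rwa [uIcc_of_le hT]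
    simpa [hF, uIcc_of_le hT] using intervalIntegral.continuousOn_primitive_interval this
  have hFderiv : ∀ t ∈ Ioo (0:ℝ) T, HasDerivAt F (f t) t := by
    intro t ht
    have hm : StronglyMeasurableAtFilter f (nhds t) volume :=
      ContinuousAt.stronglyMeasurableAtFilter isOpen_Ioo
        (fun x hx => hfc x (Ioo_subset_Icc_self hx)) t ht
    have hii : IntervalIntegrable f volume 0 t := by
      apply IntegrableOn.intervalIntegrable
      rw [uIcc_of_le ht.1.le]
      exact hfint.mono_set (Icc_subset_Icc le_rfl ht.2.le)
    exact intervalIntegral.integral_hasDerivAt_right hii hm (hfc t (Ioo_subset_Icc_self ht))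
  set h₁ : ℝ → ℝ := fun t => Real.exp (-t) * (K + F t) with hh₁
  have hhderiv : ∀ t ∈ Ioo (0:ℝ) T, HasDerivAt h₁ (Real.exp (-t) * (f t - (K + F t))) t := by
    intro t ht
    have he : HasDerivAt (fun s : ℝ => Real.exp (-s)) (-Real.exp (-t)) t := by
      simpa using ((hasDerivAt_id t).neg).exp
    have := he.mul ((hasDerivAt_const t K).add (hFderiv t ht))
    exact this.congr_deriv (by simp only [Pi.add_apply]; ring)
  have hanti : AntitoneOn h₁ (Icc 0 T) := by
    apply antitoneOn_of_deriv_nonpos (convex_Icc 0 T)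
    · exact (Real.continuous_exp.comp continuous_neg).continuousOn.mul
        (continuousOn_const.add hFcont)
    · intro t ht
      rw [interior_Icc] at ht
      exact (hhderiv t ht).differentiableAt.differentiableWithinAt
    · intro t ht
      rw [interior_Icc] at ht
      rw [(hhderiv t ht).deriv]
      have hfle : f t ≤ K + F t := h t (Ioo_subset_Icc_self ht)
      have : (0:ℝ) < Real.exp (-t) := Real.exp_pos _
      nlinarith
  intro t ht
  have h0 : h₁ t ≤ h₁ 0 := hanti (left_mem_Icc.2 hT) ht ht.1
  have hF0 : F 0 = 0 := by simp [hF]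
  have hexp : (0:ℝ) < Real.exp (-t) := Real.exp_pos _
  have h2 : Real.exp (-t) * (K + F t) ≤ K := by
    simpa [hh₁, hF0] using h0
  have h3 : K + F t ≤ K * Real.exp t := by
    rw [Real.exp_neg] at h2
    rw [inv_mul_le_iff₀ (Real.exp_pos t)] at h2
    linarith [h2]
  calc f t ≤ K + F t := h t ht
    _ ≤ K * Real.exp t := h3

/-- Second a priori estimate of Lemma A.1: L²-in-time bound for the velocity in
the `a`-norm. -/
theorem stmt_3
    {M V : Type*}
    [NormedAddCommGroup M] [InnerProductSpace ℝ M] [CompleteSpace M]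
    [NormedAddCommGroup V] [InnerProductSpace ℝ V] [CompleteSpace V]
    (a : V →L[ℝ] V →L[ℝ] ℝ) (b : V →L[ℝ] M →L[ℝ] ℝ) (c : M →L[ℝ] M →L[ℝ] ℝ)
    (H1 : ∀ u : V, u ≠ 0 → 0 < a u u)
    (H2 : ∀ μ : M, 0 ≤ c μ μ)
    (T : ℝ) (hT : 0 < T)
    (L : ℝ → M) (hLmeas : StronglyMeasurable L)
    (hLint : IntegrableOn (fun t => ‖L t‖ ^ 2) (Icc 0 T))
    (p₀ : M)
    (p p' : ℝ → M) (u : ℝ → V)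
    (hpcont : ContinuousOn p (Icc 0 T)) (hp0 : p 0 = p₀)
    (hpderiv : ∀ t ∈ Icc (0:ℝ) T, HasDerivAt p (p' t) t)
    (heqa : ∀ t ∈ Icc (0:ℝ) T, ∀ v : V, a (u t) v = b v (p t))
    (heqb : ∀ t ∈ Icc (0:ℝ) T, ∀ μ : M,
      ⟪p' t, μ⟫ + c (p t) μ + b (u t) μ = ⟪L t, μ⟫)
    (huint : IntegrableOn (fun t => a (u t) (u t)) (Icc 0 T)) :
    (∫ t in (0:ℝ)..T, a (u t) (u t)) ≤
      (1 / 2) * (1 + T * Real.exp T) * (‖p₀‖ ^ 2 + ∫ s in (0:ℝ)..T, ‖L s‖ ^ 2) := by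
  set f : ℝ → ℝ := fun t => ‖p t‖ ^ 2 with hfdef
  -- nonnegativity of a(u,u)
  have ha_nonneg : ∀ t : ℝ, 0 ≤ a (u t) (u t) := by
    intro t
    rcases eq_or_ne (u t) 0 with h | h
    · simp [h]
    · exact (H1 _ h).le
  -- derivative of f
  have hf' : ∀ t ∈ Icc (0:ℝ) T, HasDerivAt f (2 * ⟪p' t, p t⟫) t := by
    intro t ht
    have := (hpderiv t ht).inner ℝ (hpderiv t ht)
    have h2 : HasDerivAt (fun s => ⟪p s, p s⟫) (2 * ⟪p' t, p t⟫) t := by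
      exact this.congr_deriv (by rw [real_inner_comm (p t) (p' t)]; ring)
    have heq : (fun s => ⟪p s, p s⟫) = f := by
      funext s; simp [hfdef, real_inner_self_eq_norm_sq]
    rwa [heq] at h2
  -- pointwise differential inequality
  have hbound : ∀ t ∈ Icc (0:ℝ) T,
      2 * ⟪p' t, p t⟫ ≤ ‖L t‖ ^ 2 + f t - 2 * a (u t) (u t) := by
    intro t ht
    have h1 := heqb t ht (p t)
    have h2 := heqa t ht (u t)
    have h3 : ⟪L t, p t⟫ ≤ ‖L t‖ * ‖p t‖ := real_inner_le_norm _ _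
    have h4 := H2 (p t)
    have h5 : ‖L t‖ * ‖p t‖ ≤ (‖L t‖ ^ 2 + ‖p t‖ ^ 2) / 2 := by nlinarith [sq_nonneg (‖L t‖ - ‖p t‖)]
    simp only [hfdef]
    nlinarith [h1, h2, h3, h4, h5]
  -- continuity/integrability facts
  have hfcAt : ∀ t ∈ Icc (0:ℝ) T, ContinuousAt f t := by
    intro t ht
    exact ((hpderiv t ht).continuousAt.norm).pow 2
  have hfcont : ContinuousOn f (Icc 0 T) := fun t ht => (hfcAt t ht).continuousWithinAt
  have hfint : IntegrableOn f (Icc 0 T) := hfcont.integrableOn_Icc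
  set g : ℝ → ℝ := fun t => ‖L t‖ ^ 2 + f t - 2 * a (u t) (u t) with hgdef
  have hgint : IntegrableOn g (Icc 0 T) := (hLint.add hfint).sub (huint.const_mul 2)
  -- energy inequality on [0, t]
  have hEnergy : ∀ t ∈ Icc (0:ℝ) T, f t - f 0 ≤ ∫ s in (0:ℝ)..t, g s := by
    intro t ht
    apply intervalIntegral.sub_le_integral_of_hasDeriv_right_of_le ht.1
      (hfcont.mono (Icc_subset_Icc le_rfl ht.2))
      (fun x hx => (hf' x ⟨hx.1.le, hx.2.le.trans ht.2⟩).hasDerivWithinAt)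
      (hgint.mono_set (Icc_subset_Icc le_rfl ht.2))
    intro x hx
    exact hbound x ⟨hx.1.le, hx.2.le.trans ht.2⟩
  -- interval integrabilities
  have hIIL : ∀ t ∈ Icc (0:ℝ) T, IntervalIntegrable (fun s => ‖L s‖ ^ 2) volume 0 t := by
    intro t ht
    apply IntegrableOn.intervalIntegrable
    rw [uIcc_of_le ht.1]
    exact hLint.mono_set (Icc_subset_Icc le_rfl ht.2)
  have hIIf : ∀ t ∈ Icc (0:ℝ) T, IntervalIntegrable f volume 0 t := by
    intro t ht
    apply IntegrableOn.intervalIntegrable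
    rw [uIcc_of_le ht.1]
    exact hfint.mono_set (Icc_subset_Icc le_rfl ht.2)
  have hIIa : ∀ t ∈ Icc (0:ℝ) T, IntervalIntegrable (fun s => a (u s) (u s)) volume 0 t := by
    intro t ht
    apply IntegrableOn.intervalIntegrable
    rw [uIcc_of_le ht.1]
    exact huint.mono_set (Icc_subset_Icc le_rfl ht.2)
  have hTmem : T ∈ Icc (0:ℝ) T := right_mem_Icc.2 hT.le
  -- split the integral of g
  have hgsplit : ∀ t ∈ Icc (0:ℝ) T, (∫ s in (0:ℝ)..t, g s) =
      (∫ s in (0:ℝ)..t, ‖L s‖ ^ 2) + (∫ s in (0:ℝ)..t, f s)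
        - 2 * ∫ s in (0:ℝ)..t, a (u s) (u s) := by
    intro t ht
    have e1 : (∫ s in (0:ℝ)..t, g s)
        = (∫ s in (0:ℝ)..t, (‖L s‖ ^ 2 + f s)) - ∫ s in (0:ℝ)..t, 2 * a (u s) (u s) := by
      apply intervalIntegral.integral_sub ((hIIL t ht).add (hIIf t ht))
      exact (hIIa t ht).const_mul 2
    rw [e1, intervalIntegral.integral_add (hIIL t ht) (hIIf t ht),
      intervalIntegral.integral_const_mul]
  -- K
  set K : ℝ := f 0 + ∫ s in (0:ℝ)..T, ‖L s‖ ^ 2 with hKdef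
  have hLK : ∀ t ∈ Icc (0:ℝ) T, (∫ s in (0:ℝ)..t, ‖L s‖ ^ 2) ≤ ∫ s in (0:ℝ)..T, ‖L s‖ ^ 2 := by
    intro t ht
    have := intervalIntegral.integral_mono_interval (le_refl (0:ℝ)) ht.1 ht.2
      (Filter.Eventually.of_forall fun s => sq_nonneg ‖L s‖) (hIIL T hTmem)
    exact this
  have hK0 : 0 ≤ K := by
    have h1 : (0:ℝ) ≤ ∫ s in (0:ℝ)..T, ‖L s‖ ^ 2 :=
      intervalIntegral.integral_nonneg hT.le (fun s _ => sq_nonneg _)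
    have : (0:ℝ) ≤ f 0 := sq_nonneg _
    linarith
  -- integral inequality for Gronwall
  have hGron : ∀ t ∈ Icc (0:ℝ) T, f t ≤ K + ∫ s in (0:ℝ)..t, f s := by
    intro t ht
    have h1 := hEnergy t ht
    rw [hgsplit t ht] at h1
    have h2 : (0:ℝ) ≤ ∫ s in (0:ℝ)..t, a (u s) (u s) :=
      intervalIntegral.integral_nonneg ht.1 (fun s _ => ha_nonneg s)
    have h3 := hLK t ht
    simp only [hKdef]
    linarith
  have hfexp : ∀ t ∈ Icc (0:ℝ) T, f t ≤ K * Real.exp t :=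
    gronwall_integral_form hT.le hK0 hfcAt hGron
  -- integrate f bound
  have hfintbound : (∫ s in (0:ℝ)..T, f s) ≤ T * (K * Real.exp T) := by
    have h1 : (∫ s in (0:ℝ)..T, f s) ≤ ∫ s in (0:ℝ)..T, K * Real.exp T := by
      apply intervalIntegral.integral_mono_on hT.le (hIIf T hTmem) intervalIntegrable_const
      intro s hs
      calc f s ≤ K * Real.exp s := hfexp s hs
        _ ≤ K * Real.exp T := by
            apply mul_le_mul_of_nonneg_left (Real.exp_le_exp.2 hs.2) hK0
    have h2 : (∫ _s in (0:ℝ)..T, K * Real.exp T) = T * (K * Real.exp T) := by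
      rw [intervalIntegral.integral_const, smul_eq_mul, sub_zero]
    linarith
  -- final computation
  have hfinal := hEnergy T hTmem
  rw [hgsplit T hTmem] at hfinal
  have hfT : 0 ≤ f T := sq_nonneg _
  have hf0 : f 0 = ‖p₀‖ ^ 2 := by simp [hfdef, hp0]
  have hexpT : 0 ≤ Real.exp T := (Real.exp_pos T).le
  -- 2 * ∫ a(u,u) ≤ f 0 + ∫ ‖L‖² + ∫ f ≤ K + T K e^T = (1 + T e^T) K
  have hmain : 2 * (∫ s in (0:ℝ)..T, a (u s) (u s)) ≤ K + T * (K * Real.exp T) := by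
    linarith [hKdef.le, hKdef.ge]
  have hgoal : (1 / 2) * (1 + T * Real.exp T) * (‖p₀‖ ^ 2 + ∫ s in (0:ℝ)..T, ‖L s‖ ^ 2)
      = (1 / 2) * (K + T * (K * Real.exp T)) := by
    rw [hKdef, hf0]; ring
  rw [hgoal]
  clear_value K
  linarith [hmain]
end

section
/- Third a priori estimate of Lemma A.1 (L²-in-time bound on the time derivative of the pressure): assume hypotheses (H1), (H2) and (H4), that a and c are symmetric, and that C_c > 0 satisfies c(η,μ) ≤ C_c‖η‖_M‖μ‖_M for all η, μ ∈ M. Let (p,u) be a strong solution of the abstract evolution problem in mixed form on [0,T] with initial datum p₀ = ι w₀ for some w₀ ∈ W, and suppose in addition that u is continuous on [0,T], u is differentiable at every t ∈ [0,T] with derivative u'(t), the differentiated equation a(u'(t), v) = b(v, p'(t)) holds for all v ∈ Σ and t ∈ [0,T], and t ↦ ‖p'(t)‖²_M is integrable on [0,T]. Then ∫₀ᵀ ‖p'(t)‖²_M dt ≤ ∫₀ᵀ ‖L(t)‖²_M dt + C_c·‖p₀‖²_M + C_b²·‖w₀‖²_W. -/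
set_option maxHeartbeats 800000


open MeasureTheory Set
open scoped RealInnerProductSpace

/-- Third a priori estimate of Lemma A.1: L²-in-time bound on the time
derivative of the pressure. -/
theorem stmt_4
    {M V W : Type*}
    [NormedAddCommGroup M] [InnerProductSpace ℝ M] [CompleteSpace M]
    [NormedAddCommGroup V] [InnerProductSpace ℝ V] [CompleteSpace V]
    [NormedAddCommGroup W] [NormedSpace ℝ W]
    (a : V →L[ℝ] V →L[ℝ] ℝ) (b : V →L[ℝ] M →L[ℝ] ℝ) (c : M →L[ℝ] M →L[ℝ] ℝ)
    (ι : W →L[ℝ] M)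
    (Cb Cc : ℝ) (hCb : 0 < Cb) (hCc : 0 < Cc)
    (H1 : ∀ u : V, u ≠ 0 → 0 < a u u)
    (H2 : ∀ μ : M, 0 ≤ c μ μ)
    (H4 : ∀ (u : V) (w : W), b u (ι w) ≤ Cb * Real.sqrt (a u u) * ‖w‖)
    (hasymm : ∀ u v : V, a u v = a v u)
    (hcsymm : ∀ η μ : M, c η μ = c μ η)
    (hccont : ∀ η μ : M, c η μ ≤ Cc * ‖η‖ * ‖μ‖)
    (T : ℝ) (hT : 0 < T)
    (L : ℝ → M) (hLmeas : StronglyMeasurable L)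
    (hLint : IntegrableOn (fun t => ‖L t‖ ^ 2) (Icc 0 T))
    (w₀ : W) (p₀ : M) (hp₀ : p₀ = ι w₀)
    (p p' : ℝ → M) (u u' : ℝ → V)
    -- (p, u) is a strong solution
    (hpcont : ContinuousOn p (Icc 0 T)) (hp0 : p 0 = p₀)
    (hpderiv : ∀ t ∈ Icc (0:ℝ) T, HasDerivAt p (p' t) t)
    (heqa : ∀ t ∈ Icc (0:ℝ) T, ∀ v : V, a (u t) v = b v (p t))
    (heqb : ∀ t ∈ Icc (0:ℝ) T, ∀ μ : M,
      ⟪p' t, μ⟫ + c (p t) μ + b (u t) μ = ⟪L t, μ⟫)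
    -- additional regularity of u and the differentiated equation
    (hucont : ContinuousOn u (Icc 0 T))
    (huderiv : ∀ t ∈ Icc (0:ℝ) T, HasDerivAt u (u' t) t)
    (heqa' : ∀ t ∈ Icc (0:ℝ) T, ∀ v : V, a (u' t) v = b v (p' t))
    (hp'int : IntegrableOn (fun t => ‖p' t‖ ^ 2) (Icc 0 T)) :
    (∫ t in (0:ℝ)..T, ‖p' t‖ ^ 2) ≤
      (∫ t in (0:ℝ)..T, ‖L t‖ ^ 2) + Cc * ‖p₀‖ ^ 2 + Cb ^ 2 * ‖w₀‖ ^ 2 := by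

  have ha_nn : ∀ v : V, 0 ≤ a v v := by
    intro v
    rcases eq_or_ne v 0 with h | h
    · simp [h]
    · exact (H1 v h).le
  set g : ℝ → ℝ := fun t => c (p t) (p t) + a (u t) (u t) with hgdef
  set g' : ℝ → ℝ := fun t => 2 * ⟪L t, p' t⟫ - 2 * ‖p' t‖ ^ 2 with hg'def
  -- key pointwise identity
  have key : ∀ t ∈ Icc (0:ℝ) T,
      c (p t) (p' t) + a (u' t) (u t) = ⟪L t, p' t⟫ - ‖p' t‖ ^ 2 := by
    intro t ht
    have h1 := heqb t ht (p' t)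
    have h2 := heqa' t ht (u t)
    have h3 : ⟪p' t, p' t⟫ = ‖p' t‖ ^ 2 := real_inner_self_eq_norm_sq (p' t)
    linarith [h1, h2, h3]
  -- derivative of the energy
  have hgderiv : ∀ t ∈ Icc (0:ℝ) T, HasDerivAt g (g' t) t := by
    intro t ht
    have hp := hpderiv t ht
    have hu := huderiv t ht
    have hc1 : HasDerivAt (fun s => c (p s)) (c (p' t)) t :=
      c.hasFDerivAt.comp_hasDerivAt t hp
    have hc : HasDerivAt (fun s => c (p s) (p s))
        ((c (p' t)) (p t) + (c (p t)) (p' t)) t := hc1.clm_apply hp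
    have ha1 : HasDerivAt (fun s => a (u s)) (a (u' t)) t :=
      a.hasFDerivAt.comp_hasDerivAt t hu
    have ha : HasDerivAt (fun s => a (u s) (u s))
        ((a (u' t)) (u t) + (a (u t)) (u' t)) t := ha1.clm_apply hu
    have := hc.add ha
    refine this.congr_deriv ?_
    have h1 := key t ht
    have h2 := hcsymm (p t) (p' t)
    have h3 := hasymm (u t) (u' t)
    show _ = 2 * ⟪L t, p' t⟫ - 2 * ‖p' t‖ ^ 2
    linarith [key t ht, hcsymm (p t) (p' t), hasymm (u t) (u' t)]
  -- measurability / integrability of the inner product term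
  have hp'meas : AEStronglyMeasurable p' (volume.restrict (Icc (0:ℝ) T)) := by
    have h1 : StronglyMeasurable (deriv p) := stronglyMeasurable_deriv p
    refine h1.aestronglyMeasurable.congr ?_
    filter_upwards [ae_restrict_mem measurableSet_Icc] with t ht
    exact ((hpderiv t ht).deriv)
  have hipmeas : AEStronglyMeasurable (fun t => ⟪L t, p' t⟫)
      (volume.restrict (Icc (0:ℝ) T)) :=
    hLmeas.aestronglyMeasurable.inner hp'meas
  have hbnd : ∀ t, |⟪L t, p' t⟫| ≤ (‖L t‖ ^ 2 + ‖p' t‖ ^ 2) / 2 := by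
    intro t
    have h1 := abs_real_inner_le_norm (L t) (p' t)
    nlinarith [sq_nonneg (‖L t‖ - ‖p' t‖), norm_nonneg (L t), norm_nonneg (p' t)]
  have hsumint : IntegrableOn (fun t => (‖L t‖ ^ 2 + ‖p' t‖ ^ 2) / 2) (Icc 0 T) := by
    exact ((hLint.add hp'int).div_const 2)
  have hipint : IntegrableOn (fun t => ⟪L t, p' t⟫) (Icc (0:ℝ) T) := by
    refine Integrable.mono' hsumint hipmeas ?_
    filter_upwards with t
    simpa [Real.norm_eq_abs] using hbnd t
  have hg'int : IntegrableOn g' (Icc (0:ℝ) T) := by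
    have : IntegrableOn (fun t => 2 * ⟪L t, p' t⟫ - 2 * ‖p' t‖ ^ 2) (Icc (0:ℝ) T) :=
      (hipint.const_mul 2).sub (hp'int.const_mul 2)
    exact this
  have huIcc : Set.uIcc (0:ℝ) T = Icc (0:ℝ) T := Set.uIcc_of_le hT.le
  -- FTC
  have hFTC : ∫ t in (0:ℝ)..T, g' t = g T - g 0 := by
    refine intervalIntegral.integral_eq_sub_of_hasDerivAt ?_ ?_
    · intro t ht
      exact hgderiv t (huIcc ▸ ht)
    · exact IntegrableOn.intervalIntegrable (by rw [huIcc]; exact hg'int)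
  have hp'ii : IntervalIntegrable (fun t => ‖p' t‖ ^ 2) volume 0 T :=
    IntegrableOn.intervalIntegrable (by rw [huIcc]; exact hp'int)
  have hLii : IntervalIntegrable (fun t => ‖L t‖ ^ 2) volume 0 T :=
    IntegrableOn.intervalIntegrable (by rw [huIcc]; exact hLint)
  have hipii : IntervalIntegrable (fun t => ⟪L t, p' t⟫) volume 0 T :=
    IntegrableOn.intervalIntegrable (by rw [huIcc]; exact hipint)
  -- split the integral of g'
  have hsplit : ∫ t in (0:ℝ)..T, g' t =
      2 * (∫ t in (0:ℝ)..T, ⟪L t, p' t⟫) - 2 * ∫ t in (0:ℝ)..T, ‖p' t‖ ^ 2 := by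
    rw [show g' = fun t => 2 * ⟪L t, p' t⟫ - 2 * ‖p' t‖ ^ 2 from rfl]
    rw [intervalIntegral.integral_sub (hipii.const_mul 2) (hp'ii.const_mul 2),
      intervalIntegral.integral_const_mul, intervalIntegral.integral_const_mul]
  -- bound the inner product integral
  have hipbound : (∫ t in (0:ℝ)..T, ⟪L t, p' t⟫) ≤
      ∫ t in (0:ℝ)..T, (‖L t‖ ^ 2 + ‖p' t‖ ^ 2) / 2 := by
    refine intervalIntegral.integral_mono_on hT.le hipii ?_ ?_
    · exact IntegrableOn.intervalIntegrable (by rw [huIcc]; exact hsumint)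
    · intro t _
      exact (le_abs_self _).trans (hbnd t)
  have hsumsplit : (∫ t in (0:ℝ)..T, (‖L t‖ ^ 2 + ‖p' t‖ ^ 2) / 2) =
      ((∫ t in (0:ℝ)..T, ‖L t‖ ^ 2) + ∫ t in (0:ℝ)..T, ‖p' t‖ ^ 2) / 2 := by
    rw [show (fun t => (‖L t‖ ^ 2 + ‖p' t‖ ^ 2) / 2)
        = fun t => (‖L t‖ ^ 2 + ‖p' t‖ ^ 2) * (2⁻¹ : ℝ) from by
      funext t; ring]
    rw [intervalIntegral.integral_mul_const, intervalIntegral.integral_add hLii hp'ii]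
    ring
  -- bounds on g T and g 0
  have hgT : 0 ≤ g T := add_nonneg (H2 (p T)) (ha_nn (u T))
  have hg0 : g 0 ≤ Cc * ‖p₀‖ ^ 2 + Cb ^ 2 * ‖w₀‖ ^ 2 := by
    have hc0 : c (p 0) (p 0) ≤ Cc * ‖p₀‖ ^ 2 := by
      rw [hp0]
      have := hccont p₀ p₀
      nlinarith [this]
    have ha0 : a (u 0) (u 0) ≤ Cb ^ 2 * ‖w₀‖ ^ 2 := by
      have h0T : (0:ℝ) ∈ Icc (0:ℝ) T := ⟨le_refl 0, hT.le⟩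
      have h1 : a (u 0) (u 0) = b (u 0) (p 0) := heqa 0 h0T (u 0)
      have h2 : b (u 0) (ι w₀) ≤ Cb * Real.sqrt (a (u 0) (u 0)) * ‖w₀‖ := H4 (u 0) w₀
      have heq : a (u 0) (u 0) = b (u 0) (ι w₀) := by rw [h1, hp0, hp₀]
      have h3 : a (u 0) (u 0) ≤ Cb * Real.sqrt (a (u 0) (u 0)) * ‖w₀‖ := by
        linarith [heq, h2]
      have h4 : Real.sqrt (a (u 0) (u 0)) * Real.sqrt (a (u 0) (u 0)) = a (u 0) (u 0) :=
        Real.mul_self_sqrt (ha_nn (u 0))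
      nlinarith [sq_nonneg (Real.sqrt (a (u 0) (u 0)) - Cb * ‖w₀‖),
        Real.sqrt_nonneg (a (u 0) (u 0)), norm_nonneg w₀]
    calc g 0 = c (p 0) (p 0) + a (u 0) (u 0) := rfl
      _ ≤ Cc * ‖p₀‖ ^ 2 + Cb ^ 2 * ‖w₀‖ ^ 2 := add_le_add hc0 ha0
  linarith [hFTC, hsplit, hipbound, hsumsplit, hgT, hg0]
end
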